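/- If f : Y → X is a finite surjective morphism of smooth projective varieties and 𝔈 is a Higgs bundle on X, then 𝔈 is H-ample (respectively H-nef) if and only if f*𝔈 is H-ample (respectively H-nef). -/
import Mathlib


/-- An abstract theory of Higgs bundles (on the varieties in play, together with all
the Higgs Grassmannians), as needed to formulate the recursive notions of
Higgs-ampleness and Higgs-numerical effectiveness of Bruzzo–Graña Otero. -/
structure HiggsTheory where
  /-- Higgs bundles -/
  HB : Type
  /-- rank of the underlying vector bundle -/
  rank : HB → ℕ
  rank_pos : ∀ E, 0 < rank E
  /-- dual Higgs bundle -/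
  dual : HB → HB
  /-- the determinant line bundle det E is ample -/
  detAmple : HB → Prop
  /-- the determinant line bundle det E is nef -/
  detNef : HB → Prop
  /-- for rank-one Higgs bundles: the underlying line bundle is ample -/
  lineAmple : HB → Prop
  /-- for rank-one Higgs bundles: the underlying line bundle is nef -/
  lineNef : HB → Prop
  /-- `UnivQuot E Q`: `Q` is a universal Higgs quotient bundle `Q_{s,E}` of `E` on one of
  the Higgs Grassmannians `HGr_s(E)`, `0 < s < rank E` -/
  UnivQuot : HB → HB → Prop
  quot_rank_lt : ∀ E Q, UnivQuot E Q → rank Q < rank E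

/-- Higgs-ampleness, defined recursively on the rank. -/
def HiggsTheory.HAmple (T : HiggsTheory) (E : T.HB) : Prop :=
  if T.rank E = 1 then T.lineAmple E
  else T.detAmple E ∧ ∀ Q, T.UnivQuot E Q → T.HAmple Q
termination_by T.rank E
decreasing_by exact T.quot_rank_lt _ _ ‹_›

/-- Higgs-numerical effectiveness (H-nefness), defined recursively on the rank. -/
def HiggsTheory.HNef (T : HiggsTheory) (E : T.HB) : Prop :=
  if T.rank E = 1 then T.lineNef E
  else T.detNef E ∧ ∀ Q, T.UnivQuot E Q → T.HNef Q
termination_by T.rank E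
decreasing_by exact T.quot_rank_lt _ _ ‹_›

/-- Higgs-numerical flatness: both `E` and its dual are H-nef. -/
def HiggsTheory.HNflat (T : HiggsTheory) (E : T.HB) : Prop :=
  T.HNef E ∧ T.HNef (T.dual E)

/-- If `f : Y → X` is a finite surjective morphism of smooth projective
varieties and `𝔈` is a Higgs bundle on `X`, then `𝔈` is H-ample (resp. H-nef) if and only
if `f*𝔈` is H-ample (resp. H-nef).
`pull` denotes pullback along the finite surjective morphism `f` (and along the induced
finite surjective morphisms `f̄ : HGr_s(f*𝔈) → HGr_s(𝔈)` on Higgs Grassmannians).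
Context facts: pullback preserves rank; a line bundle is ample (nef) iff its pullback
along a finite surjective morphism is (`hline_*`); `det(f*E) ≅ f*(det E)` gives
`hdet_*`; and `Q_{s,f*𝔈} ≅ f̄*(Q_{s,𝔈})` gives `hquot`, `hquot'`. -/
theorem pullback_finite_surjective_hample_hnef_iff (T : HiggsTheory)
    (pull : T.HB → T.HB)
    (pull_rank : ∀ E, T.rank (pull E) = T.rank E)
    (hline_ample : ∀ E, T.rank E = 1 → (T.lineAmple E ↔ T.lineAmple (pull E)))
    (hline_nef : ∀ E, T.rank E = 1 → (T.lineNef E ↔ T.lineNef (pull E)))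
    (hdet_ample : ∀ E, T.detAmple E ↔ T.detAmple (pull E))
    (hdet_nef : ∀ E, T.detNef E ↔ T.detNef (pull E))
    (hquot : ∀ E Q, T.UnivQuot E Q → T.UnivQuot (pull E) (pull Q))
    (hquot' : ∀ E Q', T.UnivQuot (pull E) Q' → ∃ Q, T.UnivQuot E Q ∧ Q' = pull Q)
    (E : T.HB) :
    (T.HAmple E ↔ T.HAmple (pull E)) ∧ (T.HNef E ↔ T.HNef (pull E)) := by
  obtain ⟨n, hn⟩ : ∃ n, T.rank E = n := ⟨_, rfl⟩
  induction n using Nat.strong_induction_on generalizing E with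
  | _ n ih =>
  subst hn
  constructor
  · rw [HiggsTheory.HAmple.eq_def T E, HiggsTheory.HAmple.eq_def T (pull E), pull_rank]
    by_cases h1 : T.rank E = 1
    · simp only [h1, if_pos rfl]; exact hline_ample E h1
    · simp only [if_neg h1]
      constructor
      · rintro ⟨hd, hq⟩
        refine ⟨(hdet_ample E).1 hd, fun Q' hQ' => ?_⟩
        obtain ⟨Q, hQ, rfl⟩ := hquot' E Q' hQ'
        exact ((ih _ (T.quot_rank_lt _ _ hQ) Q rfl).1).1 (hq Q hQ)
      · rintro ⟨hd, hq⟩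
        refine ⟨(hdet_ample E).2 hd, fun Q hQ => ?_⟩
        exact ((ih _ (T.quot_rank_lt _ _ hQ) Q rfl).1).2 (hq _ (hquot E Q hQ))
  · rw [HiggsTheory.HNef.eq_def T E, HiggsTheory.HNef.eq_def T (pull E), pull_rank]
    by_cases h1 : T.rank E = 1
    · simp only [h1, if_pos rfl]; exact hline_nef E h1
    · simp only [if_neg h1]
      constructor
      · rintro ⟨hd, hq⟩
        refine ⟨(hdet_nef E).1 hd, fun Q' hQ' => ?_⟩
        obtain ⟨Q, hQ, rfl⟩ := hquot' E Q' hQ'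
        exact ((ih _ (T.quot_rank_lt _ _ hQ) Q rfl).2).1 (hq Q hQ)
      · rintro ⟨hd, hq⟩
        refine ⟨(hdet_nef E).2 hd, fun Q hQ => ?_⟩
        exact ((ih _ (T.quot_rank_lt _ _ hQ) Q rfl).2).2 (hq _ (hquot E Q hQ))
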